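/- Let Σ = {a_1,…,a_k} and let p, q be coprime positive integers. Define U = { w ∈ Σ* : |w|_{a_j} ≡ p−1 (mod p) for all j ∈ {1,…,k} } and V = { w ∈ Σ* : |w|_{a_j} ≡ q−1 (mod q) for all j ∈ {1,…,k} }. Then U and V are commutative regular languages with product-form minimal automata, sc(U) = p^k, sc(V) = q^k, the shuffle U ⧢ V has a product-form minimal automaton, and sc(U ⧢ V) = p^k · q^k. Hence the lower bound sc(U)·sc(V) for the state complexity of shuffle on this class is attained. -/

import Mathlib

/-- The Nerode right-congruence of a language `L`: `u ≡_L v` iff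
for all words `x`, `u ++ x ∈ L ↔ v ++ x ∈ L`. -/
def NerodeEq {α : Type*} (L : Set (List α)) (u v : List α) : Prop :=
  ∀ x : List α, u ++ x ∈ L ↔ v ++ x ∈ L

/-- The Nerode right-congruence as a setoid on words. -/
def nerodeSetoid {α : Type*} (L : Set (List α)) : Setoid (List α) where
  r := NerodeEq L
  iseqv := ⟨fun _ _ => Iff.rfl, fun h x => (h x).symm, fun h1 h2 x => (h1 x).trans (h2 x)⟩

/-- A language is regular iff its Nerode right-congruence has finitely many classes. -/
def RegularLang {α : Type*} (L : Set (List α)) : Prop :=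
  Finite (Quotient (nerodeSetoid L))

/-- The state complexity of `L`: the number of Nerode right-congruence classes. -/
noncomputable def sc {α : Type*} (L : Set (List α)) : ℕ :=
  Nat.card (Quotient (nerodeSetoid L))

/-- A language is commutative if membership only depends on the number of
occurrences of each letter. -/
def CommutativeLang {α : Type*} [DecidableEq α] (L : Set (List α)) : Prop :=
  ∀ u v : List α, (∀ x : α, u.count x = v.count x) → (u ∈ L ↔ v ∈ L)

/-- A (commutative) language has a product-form minimal automaton iff for all words
`u, v`: `u ≡_L v` holds if and only if `x^{|u|_x} ≡_L x^{|v|_x}` for every letter `x`. -/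
def HasProductForm {α : Type*} [DecidableEq α] (L : Set (List α)) : Prop :=
  ∀ u v : List α,
    NerodeEq L u v ↔
      ∀ x : α, NerodeEq L (List.replicate (u.count x) x) (List.replicate (v.count x) x)

/-- `IsShuffleOf u v w` holds iff `w` is an interleaving `x₁y₁x₂y₂⋯xₙyₙ`
with `u = x₁⋯xₙ` and `v = y₁⋯yₙ`. -/
inductive IsShuffleOf {α : Type*} : List α → List α → List α → Prop
  | nil : IsShuffleOf [] [] []
  | left {u v w : List α} {a : α} : IsShuffleOf u v w → IsShuffleOf (a :: u) v (a :: w)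
  | right {u v w : List α} {a : α} : IsShuffleOf u v w → IsShuffleOf u (a :: v) (a :: w)

/-- The shuffle of two languages. -/
def shuffleLang {α : Type*} (U V : Set (List α)) : Set (List α) :=
  {w | ∃ u ∈ U, ∃ v ∈ V, IsShuffleOf u v w}

/-! ### Auxiliary machinery -/

namespace Stmt2Aux

variable {k : ℕ}

lemma count_flatMap_aux (c : Fin k → ℕ) (j : Fin k) :
    ∀ l : List (Fin k), l.Nodup →
      ((l.flatMap fun i => List.replicate (c i) i).count j = if j ∈ l then c j else 0) := by
  intro l
  induction l with
  | nil => simp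
  | cons a l ih =>
    intro hnd
    rw [List.nodup_cons] at hnd
    rw [List.flatMap_cons, List.count_append, List.count_replicate, ih hnd.2]
    by_cases hja : a = j
    · subst hja
      simp [hnd.1]
    · have hja' : ¬ j = a := fun h => hja h.symm
      simp [hja, hja']

/-- Any function `Fin k → ℕ` is the count function of some word. -/
lemma exists_word (c : Fin k → ℕ) : ∃ w : List (Fin k), ∀ j, w.count j = c j := by
  refine ⟨(List.finRange k).flatMap fun i => List.replicate (c i) i, fun j => ?_⟩
  rw [count_flatMap_aux c j _ (List.nodup_finRange k)]
  simp [List.mem_finRange]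

/-- Per-letter languages are commutative. -/
lemma comm_setOf (f : ℕ → Prop) :
    CommutativeLang {w : List (Fin k) | ∀ j, f (w.count j)} := by
  intro u v h
  simp only [Set.mem_setOf_eq]
  exact forall_congr' fun j => by rw [h j]

lemma nerode_mono (f : ℕ → Prop) (sat : ∀ m, ∃ s, f (m + s))
    (u v : List (Fin k)) (h : NerodeEq {w : List (Fin k) | ∀ j, f (w.count j)} u v)
    (j : Fin k) (t : ℕ) (hf : f (u.count j + t)) : f (v.count j + t) := by
  classical
  choose s hs using sat
  set c : Fin k → ℕ := fun i => if i = j then t else s (u.count i) with hc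
  obtain ⟨x, hx⟩ := exists_word c
  have hu : u ++ x ∈ {w : List (Fin k) | ∀ j, f (w.count j)} := by
    intro i
    rw [List.count_append, hx]
    by_cases hij : i = j
    · subst hij; simpa [hc] using hf
    · simpa [hc, hij] using hs (u.count i)
  have hv := (h x).mp hu
  have hvj := hv j
  rw [List.count_append, hx] at hvj
  simpa [hc] using hvj

/-- Characterization of the Nerode congruence of a per-letter language. -/
lemma nerode_iff (f : ℕ → Prop) (sat : ∀ m, ∃ s, f (m + s)) (u v : List (Fin k)) :
    NerodeEq {w : List (Fin k) | ∀ j, f (w.count j)} u v ↔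
      ∀ j t, (f (u.count j + t) ↔ f (v.count j + t)) := by
  constructor
  · intro h j t
    exact ⟨nerode_mono f sat u v h j t, nerode_mono f sat v u (fun x => (h x).symm) j t⟩
  · intro h x
    simp only [Set.mem_setOf_eq]
    constructor
    · intro hm i
      have := hm i
      rw [List.count_append] at this ⊢
      exact (h i _).mp this
    · intro hm i
      have := hm i
      rw [List.count_append] at this ⊢
      exact (h i _).mpr this

/-- From a characterization of the Nerode congruence by a bounded invariant,
deduce regularity, product form, and the state complexity. -/
lemma main_of_char {N : ℕ} (L : Set (List (Fin k))) (g : ℕ → ℕ)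
    (hglt : ∀ n, g n < N)
    (hchar : ∀ u v : List (Fin k), NerodeEq L u v ↔ ∀ j, g (u.count j) = g (v.count j))
    (hgsurj : ∀ b : ℕ, b < N → ∃ n, g n = b) :
    RegularLang L ∧ HasProductForm L ∧ sc L = N ^ k := by
  classical
  set e : List (Fin k) → (Fin k → Fin N) := fun w j => ⟨g (w.count j), hglt _⟩ with he
  have hchar' : ∀ u v, (nerodeSetoid L).r u v ↔ e u = e v := by
    intro u v
    rw [show (nerodeSetoid L).r u v ↔ NerodeEq L u v from Iff.rfl, hchar]
    constructor
    · intro h; funext j; exact Fin.ext (h j)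
    · intro h j; exact congrArg Fin.val (congrFun h j)
  have hesurj : Function.Surjective e := by
    intro b
    choose n hn using fun j => hgsurj (b j).1 (b j).2
    obtain ⟨w, hw⟩ := exists_word n
    refine ⟨w, funext fun j => Fin.ext ?_⟩
    show g (w.count j) = (b j : ℕ)
    rw [hw, hn]
  have equiv : Quotient (nerodeSetoid L) ≃ (Fin k → Fin N) := by
    refine Equiv.ofBijective (Quotient.lift e fun a b h => (hchar' a b).mp h) ⟨?_, ?_⟩
    · rintro ⟨a⟩ ⟨b⟩ h
      exact Quotient.sound ((hchar' a b).mpr h)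
    · intro b; obtain ⟨w, hw⟩ := hesurj b; exact ⟨⟦w⟧, hw⟩
  refine ⟨Finite.of_equiv _ equiv.symm, ?_, ?_⟩
  · intro u v
    rw [hchar]
    constructor
    · intro h x
      rw [hchar]
      intro j
      rcases eq_or_ne x j with rfl | hjx
      · simpa [List.count_replicate] using h x
      · simp [List.count_replicate, hjx]
    · intro h j
      have := (hchar _ _).mp (h j) j
      simpa [List.count_replicate] using this
  · rw [sc, Nat.card_congr equiv]
    simp [Nat.card_eq_fintype_card]

/-! ### The modular languages -/

lemma add_mod_pred (p : ℕ) (hp : 0 < p) (m : ℕ) : (m + (p - 1 - m % p)) % p = p - 1 := by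
  have h1 := Nat.div_add_mod m p
  have h2 : m % p < p := Nat.mod_lt _ hp
  have h3 : m + (p - 1 - m % p) = p * (m / p) + (p - 1) := by omega
  rw [h3, Nat.mul_add_mod, Nat.mod_eq_of_lt (by omega)]

lemma modChar (p : ℕ) (hp : 0 < p) (m n : ℕ) :
    (∀ t, ((m + t) % p = p - 1 ↔ (n + t) % p = p - 1)) ↔ m % p = n % p := by
  constructor
  · intro h
    have h1 := add_mod_pred p hp m
    have h2 := (h (p - 1 - m % p)).mp h1
    have h3 : (m + (p - 1 - m % p)) % p = (n + (p - 1 - m % p)) % p := by rw [h1, h2]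
    exact Nat.ModEq.add_right_cancel' _ h3
  · intro h t
    have h' : Nat.ModEq p m n := h
    have := h'.add_right t
    rw [show ((m + t) % p = p - 1) ↔ ((n + t) % p = p - 1) from by rw [this]]

lemma U_char (p : ℕ) (hp : 0 < p) (u v : List (Fin k)) :
    NerodeEq {w : List (Fin k) | ∀ j, w.count j % p = p - 1} u v ↔
      ∀ j, u.count j % p = v.count j % p := by
  rw [nerode_iff (fun n => n % p = p - 1)
    (fun m => ⟨p - 1 - m % p, add_mod_pred p hp m⟩)]
  exact forall_congr' fun j => modChar p hp _ _

/-! ### Shuffle machinery -/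

lemma count_shuffle {α : Type*} [DecidableEq α] {u v w : List α}
    (h : IsShuffleOf u v w) (x : α) : w.count x = u.count x + v.count x := by
  induction h with
  | nil => simp
  | @left u v w a h ih => rw [List.count_cons, List.count_cons, ih]; omega
  | @right u v w a h ih => rw [List.count_cons, List.count_cons, ih]; omega

lemma shuffle_split {α : Type*} [DecidableEq α] :
    ∀ (w : List α) (c : α → ℕ), (∀ x, c x ≤ w.count x) →
      ∃ u v, IsShuffleOf u v w ∧ (∀ x, u.count x = c x) ∧
        (∀ x, v.count x = w.count x - c x) := by
  intro w
  induction w with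
  | nil =>
    intro c hc
    refine ⟨[], [], .nil, fun x => ?_, fun x => by simp⟩
    have := hc x
    simp only [List.count_nil] at this ⊢
    omega
  | cons a w ih =>
    intro c hc
    by_cases hca : c a = 0
    · obtain ⟨u, v, hs, hu, hv⟩ := ih c (fun x => by
        have := hc x
        rw [List.count_cons] at this
        rcases eq_or_ne a x with rfl | hxa
        · omega
        · simpa [hxa] using this)
      refine ⟨u, a :: v, .right hs, hu, fun x => ?_⟩
      rw [List.count_cons, List.count_cons, hv x]
      have := hc x
      rcases eq_or_ne a x with rfl | hxa
      · simp only [beq_self_eq_true, if_true]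
        omega
      · simp [hxa]
    · obtain ⟨u, v, hs, hu, hv⟩ := ih (Function.update c a (c a - 1)) (fun x => by
        have := hc x
        rw [List.count_cons] at this
        rcases eq_or_ne x a with rfl | hxa
        · rw [Function.update_self]
          simp only [beq_self_eq_true, if_true] at this
          omega
        · rw [Function.update_of_ne hxa]
          have hax : a ≠ x := fun h => hxa h.symm
          simpa [hax] using this)
      refine ⟨a :: u, v, .left hs, fun x => ?_, fun x => ?_⟩
      · rw [List.count_cons, hu x]
        rcases eq_or_ne x a with rfl | hxa
        · rw [Function.update_self]
          simp only [beq_self_eq_true, if_true]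
          omega
        · rw [Function.update_of_ne hxa]
          have hax : a ≠ x := fun h => hxa h.symm
          simp [hax]
      · rw [List.count_cons, hv x]
        have := hc x
        rw [List.count_cons] at this
        rcases eq_or_ne x a with rfl | hxa
        · rw [Function.update_self]
          simp only [beq_self_eq_true, if_true] at this ⊢
          omega
        · rw [Function.update_of_ne hxa]
          have hax : a ≠ x := fun h => hxa h.symm
          simp only [beq_iff_eq, hax, if_false, Nat.add_zero] at this ⊢

/-- The per-letter membership condition of the shuffle language. -/
def Mset (p q n : ℕ) : Prop := ∃ a, a ≤ n ∧ a % p = p - 1 ∧ (n - a) % q = q - 1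

lemma shuffle_mem (p q : ℕ) (w : List (Fin k)) :
    w ∈ shuffleLang {w : List (Fin k) | ∀ j, w.count j % p = p - 1}
        {w : List (Fin k) | ∀ j, w.count j % q = q - 1} ↔
      ∀ j, Mset p q (w.count j) := by
  constructor
  · rintro ⟨u, hu, v, hv, hs⟩ j
    refine ⟨u.count j, by rw [count_shuffle hs]; omega, hu j, ?_⟩
    rw [count_shuffle hs, Nat.add_sub_cancel_left]
    exact hv j
  · intro h
    choose a ha1 ha2 ha3 using h
    obtain ⟨u, v, hs, hu, hv⟩ := shuffle_split w a ha1
    exact ⟨u, fun j => by rw [hu]; exact ha2 j,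
           v, fun j => by rw [hv]; exact ha3 j, hs⟩

lemma mod_pred_of_dvd {q n : ℕ} (hq : 0 < q) (h : q ∣ n + 1) : n % q = q - 1 := by
  obtain ⟨c, hc⟩ := h
  have hc0 : c ≠ 0 := by rintro rfl; omega
  have h5 : q * c = q * (c - 1) + q := by
    conv_lhs => rw [show c = (c - 1) + 1 from (Nat.succ_pred_eq_of_pos
      (Nat.pos_of_ne_zero hc0)).symm]
    rw [Nat.mul_add, Nat.mul_one]
  have h4 : n = q * (c - 1) + (q - 1) := by omega
  rw [h4, Nat.mul_add_mod, Nat.mod_eq_of_lt (by omega)]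

lemma dvd_succ_of_mod_pred {p n : ℕ} (hp : 0 < p) (h : n % p = p - 1) : p ∣ n + 1 := by
  have h1 := Nat.div_add_mod n p
  refine ⟨n / p + 1, ?_⟩
  rw [Nat.mul_add, Nat.mul_one]
  omega

lemma mset_of_ge (p q : ℕ) (hp : 0 < p) (hq : 0 < q) (hpq : Nat.Coprime p q) (n : ℕ)
    (hn : p * q - 1 ≤ n) : Mset p q n := by
  have hpq0 : 0 < p * q := Nat.mul_pos hp hq
  set a := (Nat.chineseRemainder hpq (p - 1) (n + 1) : ℕ) with ha
  have halt : a < p * q := Nat.chineseRemainder_lt_mul hpq _ _ (by omega) (by omega)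
  have h1 : a ≡ p - 1 [MOD p] := (Nat.chineseRemainder hpq (p - 1) (n + 1)).2.1
  have h2 : a ≡ n + 1 [MOD q] := (Nat.chineseRemainder hpq (p - 1) (n + 1)).2.2
  refine ⟨a, by omega, ?_, ?_⟩
  · have h3 : a % p = (p - 1) % p := h1
    rw [h3, Nat.mod_eq_of_lt (by omega)]
  · have hle : a ≤ n + 1 := by omega
    have hdvd : q ∣ n + 1 - a := (Nat.modEq_iff_dvd' hle).mp h2
    rw [show n + 1 - a = (n - a) + 1 by omega] at hdvd
    exact mod_pred_of_dvd hq hdvd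

lemma not_mset (p q : ℕ) (hp : 0 < p) (hq : 0 < q) (hpq : Nat.Coprime p q)
    (h2 : 2 ≤ p * q) : ¬ Mset p q (p * q - 2) := by
  rintro ⟨a, ha, h1, h2'⟩
  obtain ⟨s, hs⟩ := dvd_succ_of_mod_pred hp h1
  obtain ⟨r, hr⟩ := dvd_succ_of_mod_pred hq h2'
  have hsq : s < q := by
    by_contra hle
    push_neg at hle
    have := Nat.mul_le_mul_left p hle
    omega
  have key : p * q - 1 - a = p * (q - s) := by
    rw [Nat.mul_sub]
    omega
  have hqdvd : q ∣ p * (q - s) := by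
    rw [← key]
    exact ⟨r, by omega⟩
  have hd : q ∣ q - s := hpq.symm.dvd_of_dvd_mul_left hqdvd
  have hs1 : 1 ≤ s := by
    rcases Nat.eq_zero_or_pos s with rfl | h
    · omega
    · exact h
  have := Nat.le_of_dvd (by omega) hd
  omega

lemma mset_behavior_lt (p q : ℕ) (hp : 0 < p) (hq : 0 < q) (hpq : Nat.Coprime p q)
    {m n : ℕ} (h : ∀ t, Mset p q (m + t) ↔ Mset p q (n + t))
    (hlt : min m (p * q - 1) < min n (p * q - 1)) : False := by
  have hpq0 : 0 < p * q := Nat.mul_pos hp hq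
  have hpq2 : 2 ≤ p * q := by omega
  have hm : m ≤ p * q - 2 := by omega
  have hmn : m < n := by omega
  have h1 := (h (p * q - 2 - m)).mpr
    (mset_of_ge p q hp hq hpq _ (by omega))
  rw [show m + (p * q - 2 - m) = p * q - 2 by omega] at h1
  exact not_mset p q hp hq hpq hpq2 h1

lemma mset_behavior (p q : ℕ) (hp : 0 < p) (hq : 0 < q) (hpq : Nat.Coprime p q) (m n : ℕ) :
    (∀ t, Mset p q (m + t) ↔ Mset p q (n + t)) ↔
      min m (p * q - 1) = min n (p * q - 1) := by
  constructor
  · intro h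
    by_contra hne
    rcases Nat.lt_or_ge (min m (p * q - 1)) (min n (p * q - 1)) with hlt | hge
    · exact mset_behavior_lt p q hp hq hpq h hlt
    · exact mset_behavior_lt p q hp hq hpq (fun t => (h t).symm) (by omega)
  · intro h t
    have hd : m = n ∨ (p * q - 1 ≤ m ∧ p * q - 1 ≤ n) := by omega
    rcases hd with rfl | ⟨h1, h2⟩
    · exact Iff.rfl
    · constructor <;> intro _ <;> exact mset_of_ge p q hp hq hpq _ (by omega)

lemma L_char (p q : ℕ) (hp : 0 < p) (hq : 0 < q) (hpq : Nat.Coprime p q)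
    (u v : List (Fin k)) :
    NerodeEq {w : List (Fin k) | ∀ j, Mset p q (w.count j)} u v ↔
      ∀ j, min (u.count j) (p * q - 1) = min (v.count j) (p * q - 1) := by
  rw [nerode_iff (Mset p q)
    (fun m => ⟨p * q - 1, mset_of_ge p q hp hq hpq _ (by omega)⟩)]
  exact forall_congr' fun j => mset_behavior p q hp hq hpq _ _

end Stmt2Aux

open Stmt2Aux in
/-- For coprime `p, q > 0`, the languages `U = {w : |w|_{a_j} ≡ p-1 (mod p) for all j}` and
`V = {w : |w|_{a_j} ≡ q-1 (mod q) for all j}` over `Σ = {a_1, …, a_k}` are commutative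
regular languages with product-form minimal automata, `sc U = p^k`, `sc V = q^k`,
their shuffle has a product-form minimal automaton, and `sc (U ⧢ V) = p^k · q^k`. -/
theorem stmt2 (k p q : ℕ) (hp : 0 < p) (hq : 0 < q) (hpq : Nat.Coprime p q) :
    let U : Set (List (Fin k)) := {w | ∀ j : Fin k, w.count j % p = p - 1}
    let V : Set (List (Fin k)) := {w | ∀ j : Fin k, w.count j % q = q - 1}
    CommutativeLang U ∧ RegularLang U ∧ HasProductForm U ∧ sc U = p ^ k ∧
    CommutativeLang V ∧ RegularLang V ∧ HasProductForm V ∧ sc V = q ^ k ∧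
    HasProductForm (shuffleLang U V) ∧ sc (shuffleLang U V) = p ^ k * q ^ k := by
  intro U V
  have hpq0 : 0 < p * q := Nat.mul_pos hp hq
  obtain ⟨hUreg, hUpf, hUsc⟩ :=
    main_of_char (k := k) U (· % p) (fun n => Nat.mod_lt _ hp)
      (U_char p hp) (fun b hb => ⟨b, Nat.mod_eq_of_lt hb⟩)
  obtain ⟨hVreg, hVpf, hVsc⟩ :=
    main_of_char (k := k) V (· % q) (fun n => Nat.mod_lt _ hq)
      (U_char q hq) (fun b hb => ⟨b, Nat.mod_eq_of_lt hb⟩)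
  have hLeq : shuffleLang U V = {w : List (Fin k) | ∀ j, Mset p q (w.count j)} :=
    Set.ext fun w => shuffle_mem p q w
  have hLchar : ∀ u v : List (Fin k), NerodeEq (shuffleLang U V) u v ↔
      ∀ j, min (u.count j) (p * q - 1) = min (v.count j) (p * q - 1) := by
    intro u v
    rw [show NerodeEq (shuffleLang U V) u v ↔
        NerodeEq {w : List (Fin k) | ∀ j, Mset p q (w.count j)} u v from by rw [hLeq]]
    exact L_char p q hp hq hpq u v
  obtain ⟨hLreg, hLpf, hLsc⟩ :=
    main_of_char (k := k) (N := p * q) (shuffleLang U V) (fun n => min n (p * q - 1))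
      (fun n => by omega) hLchar
      (fun b hb => ⟨b, by omega⟩)
  refine ⟨show CommutativeLang U from comm_setOf (fun n => n % p = p - 1), hUreg, hUpf, hUsc,
    show CommutativeLang V from comm_setOf (fun n => n % q = q - 1), hVreg, hVpf, hVsc, hLpf, ?_⟩
  rw [hLsc, mul_pow]
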